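/- arXiv:2109.08934 — 4 statements merged into one kernel-verified Lean document; each statement's English description precedes it below -/
import Mathlib

section
/- Let τ = 1 and g(x) = ln(1 + x(e - 1)). Suppose nonnegative reals x₁ ≥ x₂ ≥ x₃ ≥ ⋯ ≥ x_n satisfy ∑_j x_j = 1, x_j ≤ 1 - e^{-1} for all j, and x_j + x_k ≤ 1 - e^{-2} for all j ≠ k. If x₁ < 1 - e^{-1} and x₂ > 0, then there exists ε > 0 such that replacing x₁ by x₁ + ε and x₂ by x₂ - ε strictly decreases ∑_j g(x_j) while preserving all of the constraints. -/
theorem stmt_3 (n : ℕ) (hn : 2 ≤ n) (x : Fin n → ℝ)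
    (hanti : ∀ j k : Fin n, j ≤ k → x k ≤ x j)
    (hnonneg : ∀ j, 0 ≤ x j)
    (hsum : ∑ j, x j = 1)
    (hsingle : ∀ j, x j ≤ 1 - Real.exp (-1))
    (hpair : ∀ j k, j ≠ k → x j + x k ≤ 1 - Real.exp (-2))
    (h1 : x ⟨0, by omega⟩ < 1 - Real.exp (-1))
    (h2 : 0 < x ⟨1, by omega⟩) :
    ∃ ε > 0, ∀ x' : Fin n → ℝ,
      (x' = fun j => if j = (⟨0, by omega⟩ : Fin n) then x j + ε
                     else if j = (⟨1, by omega⟩ : Fin n) then x j - ε else x j) →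
      (∀ j, 0 ≤ x' j) ∧ (∑ j, x' j = 1) ∧
      (∀ j, x' j ≤ 1 - Real.exp (-1)) ∧
      (∀ j k, j ≠ k → x' j + x' k ≤ 1 - Real.exp (-2)) ∧
      (∑ j, Real.log (1 + x' j * (Real.exp 1 - 1)) <
        ∑ j, Real.log (1 + x j * (Real.exp 1 - 1))) := by
  set i0 : Fin n := ⟨0, by omega⟩ with hi0
  set i1 : Fin n := ⟨1, by omega⟩ with hi1
  have hne01 : i0 ≠ i1 := by simp [hi0, hi1, Fin.ext_iff]
  have he1 : (2:ℝ) < Real.exp 1 := by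
    have := Real.exp_one_gt_d9; linarith
  have hepos : (0:ℝ) < Real.exp (-1) := Real.exp_pos _
  have hemul : Real.exp (-1) * Real.exp 1 = 1 := by
    rw [← Real.exp_add]; norm_num
  have hehalf : Real.exp (-1) < 1/2 := by nlinarith
  have hexp2 : Real.exp (-2) = Real.exp (-1) * Real.exp (-1) := by
    rw [← Real.exp_add]; norm_num
  have hgap : (0:ℝ) < Real.exp (-1)/2 - Real.exp (-2) := by
    rw [hexp2]; nlinarith
  set ε : ℝ := min (x i1) (min (1 - Real.exp (-1) - x i0) (Real.exp (-1)/2 - Real.exp (-2))) with hε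
  have hεpos : 0 < ε := by
    apply lt_min h2
    apply lt_min (by linarith) hgap
  have hε1 : ε ≤ x i1 := min_le_left _ _
  have hε2 : ε ≤ 1 - Real.exp (-1) - x i0 := le_trans (min_le_right _ _) (min_le_left _ _)
  have hε3 : ε ≤ Real.exp (-1)/2 - Real.exp (-2) := le_trans (min_le_right _ _) (min_le_right _ _)
  have hba : x i1 ≤ x i0 := hanti i0 i1 (by simp [hi0, hi1, Fin.le_def])
  refine ⟨ε, hεpos, ?_⟩
  intro x' hx'
  have hx'v : ∀ j, x' j = if j = i0 then x j + ε else if j = i1 then x j - ε else x j := by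
    intro j; rw [hx']
  -- key fact for pairs (i0, m) with m ∉ {i0, i1}
  have keyA : ∀ m : Fin n, m ≠ i0 → m ≠ i1 → x i0 + ε + x m ≤ 1 - Real.exp (-2) := by
    intro m hm0 hm1
    have hv0 : (m : ℕ) ≠ 0 := by simpa [hi0, Fin.ext_iff] using hm0
    have hv1 : (m : ℕ) ≠ 1 := by simpa [hi1, Fin.ext_iff] using hm1
    have hm2 : x m ≤ x i1 := by
      apply hanti
      rw [Fin.le_def]
      simp only [hi1]
      omega
    have hsub : ({i0, i1, m} : Finset (Fin n)) ⊆ Finset.univ := Finset.subset_univ _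
    have hsum3 : x i0 + x i1 + x m ≤ 1 := by
      have h3 : ∑ j ∈ ({i0, i1, m} : Finset (Fin n)), x j = x i0 + x i1 + x m := by
        rw [Finset.sum_insert (by simp [hne01, Ne.symm hm0]),
            Finset.sum_pair (Ne.symm hm1)]
        ring
      calc x i0 + x i1 + x m = ∑ j ∈ ({i0, i1, m} : Finset (Fin n)), x j := h3.symm
        _ ≤ ∑ j, x j := Finset.sum_le_sum_of_subset_of_nonneg hsub (fun j _ _ => hnonneg j)
        _ = 1 := hsum
    have := hsingle i0
    linarith
  refine ⟨?_, ?_, ?_, ?_, ?_⟩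
  · -- nonneg
    intro j
    rw [hx'v j]
    split_ifs with hj0 hj1
    · have := hnonneg j; linarith
    · subst hj1; linarith
    · exact hnonneg j
  · -- sum preserved
    have hdiff : ∑ j, (x' j - x j) = 0 := by
      rw [Finset.sum_eq_add_of_mem i0 i1 (Finset.mem_univ _) (Finset.mem_univ _) hne01]
      · rw [hx'v i0, hx'v i1]; simp [hne01, Ne.symm hne01]
      · intro c _ hc
        rw [hx'v c]; simp [hc.1, hc.2]
    have : ∑ j, x' j - ∑ j, x j = 0 := by
      rw [← Finset.sum_sub_distrib]; exact hdiff
    linarith [hsum, this]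
  · -- single constraint
    intro j
    rw [hx'v j]
    split_ifs with hj0 hj1
    · subst hj0; linarith
    · subst hj1; have := hsingle i1; linarith
    · exact hsingle j
  · -- pair constraint
    intro j k hjk
    rw [hx'v j, hx'v k]
    by_cases hj0 : j = i0
    · subst hj0
      by_cases hk1 : k = i1
      · subst hk1
        rw [if_pos rfl, if_neg (Ne.symm hne01), if_pos rfl]
        have := hpair i0 i1 hne01; linarith
      · rw [if_pos rfl, if_neg (Ne.symm hjk), if_neg hk1]
        exact keyA k (Ne.symm hjk) hk1
    · by_cases hj1 : j = i1
      · subst hj1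
        rw [if_neg hj0, if_pos rfl]
        by_cases hk0 : k = i0
        · subst hk0
          rw [if_pos rfl]
          have := hpair i0 i1 hne01; linarith
        · rw [if_neg hk0, if_neg (Ne.symm hjk)]
          have := hpair i1 k hjk; linarith
      · rw [if_neg hj0, if_neg hj1]
        by_cases hk0 : k = i0
        · subst hk0
          rw [if_pos rfl]
          have := keyA j hj0 hj1; linarith
        · by_cases hk1 : k = i1
          · subst hk1
            rw [if_neg hk0, if_pos rfl]
            have := hpair j i1 hjk; linarith
          · rw [if_neg hk0, if_neg hk1]
            exact hpair j k hjk
  · -- strict decrease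
    set c : ℝ := Real.exp 1 - 1 with hc
    have hcpos : (0:ℝ) < c := by rw [hc]; linarith
    set a := x i0 with ha
    set b := x i1 with hb
    have hu : (0:ℝ) < 1 + a * c := by nlinarith [hnonneg i0]
    have hv : (0:ℝ) < 1 + b * c := by nlinarith [hnonneg i1]
    have hu' : (0:ℝ) < 1 + (a + ε) * c := by nlinarith [hnonneg i0]
    have hv' : (0:ℝ) < 1 + (b - ε) * c := by nlinarith
    have hprod : (1 + (a + ε) * c) * (1 + (b - ε) * c) < (1 + a * c) * (1 + b * c) := by
      have t1 : (0:ℝ) ≤ ε * c * c * (a - b) :=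
        mul_nonneg (mul_nonneg (mul_nonneg hεpos.le hcpos.le) hcpos.le) (by linarith)
      have t2 : (0:ℝ) < (ε * c) * (ε * c) := mul_pos (mul_pos hεpos hcpos) (mul_pos hεpos hcpos)
      nlinarith [t1, t2]
    have hlog : Real.log (1 + (a + ε) * c) + Real.log (1 + (b - ε) * c) <
        Real.log (1 + a * c) + Real.log (1 + b * c) := by
      rw [← Real.log_mul (ne_of_gt hu') (ne_of_gt hv'), ← Real.log_mul (ne_of_gt hu) (ne_of_gt hv)]
      exact Real.log_lt_log (by positivity) hprod
    have hdiff : ∑ j, (Real.log (1 + x' j * c) - Real.log (1 + x j * c)) =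
        (Real.log (1 + (a + ε) * c) - Real.log (1 + a * c)) +
        (Real.log (1 + (b - ε) * c) - Real.log (1 + b * c)) := by
      rw [Finset.sum_eq_add_of_mem i0 i1 (Finset.mem_univ _) (Finset.mem_univ _) hne01]
      · rw [hx'v i0, hx'v i1]; simp [hne01, Ne.symm hne01, ha, hb]
      · intro m _ hm
        rw [hx'v m]; simp [hm.1, hm.2]
    have : ∑ j, Real.log (1 + x' j * c) - ∑ j, Real.log (1 + x j * c) < 0 := by
      rw [← Finset.sum_sub_distrib, hdiff]; linarith
    linarith
end

section
/- Let F(x, κ) = ∑_{y ∈ S(x)} ∫₀^κ e^{-ζ} · y/(y + (1-y)e^{-ζ}) dζ + e^{-κ}·(1 - ∏_{y ∈ S(x)} exp(-∫_κ^1 y/(y + (1-y)e^{-ζ}) dζ)), where S(x) = {x} if 0 ≤ x ≤ 1-e^{-1}, S(x) = {1-e^{-1}, x-(1-e^{-1})} if 1-e^{-1} < x ≤ 1-e^{-2}, and S(x) = {1-e^{-1}, e^{-1}-e^{-2}, x-(1-e^{-2})} if 1-e^{-2} < x ≤ 1. Then F(1 - e^{-1}, 1)/(1 - e^{-1}) ≥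 0.719. -/
theorem stmt_9 :
    ((∫ ζ in (0:ℝ)..1, Real.exp (-ζ) *
        ((1 - Real.exp (-1)) /
          ((1 - Real.exp (-1)) + (1 - (1 - Real.exp (-1))) * Real.exp (-ζ)))) +
      Real.exp (-1) * (1 - Real.exp (-(∫ ζ in (1:ℝ)..1,
        (1 - Real.exp (-1)) /
          ((1 - Real.exp (-1)) + (1 - (1 - Real.exp (-1))) * Real.exp (-ζ)))))) /
      (1 - Real.exp (-1)) ≥ 0.719 := by
  have hu : Real.exp (-1) = (Real.exp 1)⁻¹ := by
    rw [Real.exp_neg]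
  have he1 : (2.7182818283 : ℝ) < Real.exp 1 := Real.exp_one_gt_d9
  have he2 : Real.exp 1 < 2.7182818286 := Real.exp_one_lt_d9
  have hupos : 0 < Real.exp (-1) := Real.exp_pos _
  have hu1 : Real.exp (-1) < 1 := by
    rw [hu]
    rw [inv_lt_one_iff₀]
    right; linarith
  set a : ℝ := 1 - Real.exp (-1) with ha_def
  have ha : 0 < a := by simp only [ha_def]; linarith
  have ha1 : (1 : ℝ) - a = Real.exp (-1) := by simp [ha_def]
  have ha1pos : 0 < 1 - a := by rw [ha1]; exact hupos
  have hden : ∀ ζ : ℝ, 0 < a + (1 - a) * Real.exp (-ζ) :=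
    fun ζ => add_pos ha (mul_pos ha1pos (Real.exp_pos _))
  -- second integral is zero
  rw [intervalIntegral.integral_same]
  simp only [neg_zero, Real.exp_zero, sub_self, mul_zero, add_zero]
  -- evaluate first integral by FTC
  have key : (∫ ζ in (0:ℝ)..1, Real.exp (-ζ) * (a / (a + (1 - a) * Real.exp (-ζ))))
      = (-(a / (1 - a)) * Real.log (a + (1 - a) * Real.exp (-(1:ℝ))))
        - (-(a / (1 - a)) * Real.log (a + (1 - a) * Real.exp (-(0:ℝ)))) := by
    apply intervalIntegral.integral_eq_sub_of_hasDerivAt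
      (f := fun ζ : ℝ => -(a / (1 - a)) * Real.log (a + (1 - a) * Real.exp (-ζ)))
    · intro ζ _
      have hE : HasDerivAt (fun ζ : ℝ => Real.exp (-ζ)) (-Real.exp (-ζ)) ζ := by
        convert (hasDerivAt_neg ζ).exp using 1; ring
      have h1 : HasDerivAt (fun ζ : ℝ => a + (1 - a) * Real.exp (-ζ))
          ((1 - a) * (-Real.exp (-ζ))) ζ :=
        ((hE.const_mul (1 - a)).const_add a)
      have h2 := (h1.log (hden ζ).ne').const_mul (-(a / (1 - a)))
      convert h2 using 1
      · rfl
      have hd := (hden ζ).ne'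
      have hd2 : (1 - a) ≠ 0 := ha1pos.ne'
      field_simp
    · apply Continuous.intervalIntegrable
      exact ((Real.continuous_exp.comp continuous_neg).mul
        (continuous_const.div
          (continuous_const.add (continuous_const.mul
            (Real.continuous_exp.comp continuous_neg)))
          fun x => (hden x).ne'))
  rw [key]
  have h0 : a + (1 - a) * Real.exp (-(0:ℝ)) = 1 := by
    simp
  rw [h0, Real.log_one, mul_zero, sub_zero]
  set z : ℝ := a + (1 - a) * Real.exp (-(1:ℝ)) with hz_def
  have hzpos : 0 < z := hden 1
  -- main inequality: z ≤ exp (-(0.719 * exp (-1)))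
  have hub : Real.exp (-1) ≤ (2.7182818283 : ℝ)⁻¹ := by
    rw [hu]
    exact inv_anti₀ (by norm_num) he1.le
  have hlb : (2.7182818286 : ℝ)⁻¹ ≤ Real.exp (-1) := by
    rw [hu]
    exact inv_anti₀ (Real.exp_pos 1) he2.le
  have hzub : z ≤ 0.7674559 := by
    have : z = 1 - Real.exp (-1) + Real.exp (-1) * Real.exp (-1) := by
      rw [hz_def, ha1, ha_def]
    rw [this]
    nlinarith [hub, hlb, hupos]
  have hc : 0.719 * Real.exp (-1) ≤ (0.2645054 : ℝ) := by
    nlinarith [hub]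
  have hexpc : Real.exp (0.2645054 : ℝ) ≤ 1.3028262 := by
    have h := Real.exp_bound' (x := (0.2645054 : ℝ)) (by norm_num) (by norm_num)
      (n := 4) (by norm_num)
    have hsum : (∑ m ∈ Finset.range 4, (0.2645054 : ℝ) ^ m / m.factorial)
        + (0.2645054 : ℝ) ^ 4 * (4 + 1) / (Nat.factorial 4 * 4) ≤ 1.3028262 := by
      simp [Finset.sum_range_succ, Nat.factorial]
      norm_num
    linarith
  have hmain : z ≤ Real.exp (-(0.719 * Real.exp (-1))) := by
    have h1 : Real.exp (-(0.2645054 : ℝ)) ≤ Real.exp (-(0.719 * Real.exp (-1))) :=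
      Real.exp_le_exp.mpr (by linarith)
    have h2 : (0.7674559 : ℝ) ≤ Real.exp (-(0.2645054 : ℝ)) := by
      rw [Real.exp_neg]
      rw [le_inv_comm₀ (by norm_num) (Real.exp_pos _)]
      calc Real.exp (0.2645054 : ℝ) ≤ 1.3028262 := hexpc
        _ ≤ (0.7674559 : ℝ)⁻¹ := by norm_num
    linarith
  -- conclude
  have hlogz : Real.log z ≤ -(0.719 * Real.exp (-1)) :=
    (Real.log_le_iff_le_exp hzpos).mpr hmain
  rw [ge_iff_le, le_div_iff₀ ha]
  have hlogz' : Real.log z ≤ -(0.719 * (1 - a)) := by rw [ha1]; exact hlogz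
  have : -(a / (1 - a)) * Real.log z = (a / (1 - a)) * (-Real.log z) := by ring
  rw [this]
  have h719 : (0.719 : ℝ) * (1 - a) ≤ -Real.log z := by linarith
  calc (0.719 : ℝ) * a = (a / (1 - a)) * (0.719 * (1 - a)) := by
        field_simp
      _ ≤ (a / (1 - a)) * (-Real.log z) :=
        mul_le_mul_of_nonneg_left h719 (le_of_lt (div_pos ha ha1pos))
end

section
/- lim_{T→∞} ∑_{t=1}^{T} (1/T) · x/(x + (1-x)·(1 - τ/T)^{t-1}) = ∫₀¹ x/(x + (1-x)·e^{-τζ}) dζ = (1/τ)·ln(1 + x·(e^τ - 1)), for fixed x ∈ (0,1] and τ ∈ (0,1]. -/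
lemma aux_exp_sub {a : ℝ} (ha : 0 ≤ a) : Real.exp (-a) - (1 - a) ≤ a ^ 2 := by
  have h1 : (1 : ℝ) + a ≤ Real.exp a := by linarith [Real.add_one_le_exp a]
  have hpos : (0:ℝ) < 1 + a := by linarith
  have h2 : Real.exp (-a) ≤ 1 / (1 + a) := by
    rw [Real.exp_neg, inv_eq_one_div]
    exact one_div_le_one_div_of_le hpos h1
  have h3 : 1 / (1 + a) ≤ 1 - a + a ^ 2 := by
    rw [div_le_iff₀ hpos]; nlinarith
  linarith

lemma aux_pow_sub {b c : ℝ} (hc : 0 ≤ c) (hcb : c ≤ b) (hb : b ≤ 1) (t : ℕ) :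
    b ^ t - c ^ t ≤ t * (b - c) := by
  induction t with
  | zero => simp
  | succ n ih =>
      have hpow : c ^ n ≤ b ^ n := pow_le_pow_left₀ hc hcb n
      have hcn : (0:ℝ) ≤ c ^ n := pow_nonneg hc n
      have hcn1 : c ^ n ≤ 1 := pow_le_one₀ hc (hcb.trans hb)
      have h1 : b * (b ^ n - c ^ n) ≤ b ^ n - c ^ n :=
        mul_le_of_le_one_left (sub_nonneg.2 hpow) hb
      have h2 : (b - c) * c ^ n ≤ (b - c) * 1 :=
        mul_le_mul_of_nonneg_left hcn1 (sub_nonneg.2 hcb)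
      push_cast
      nlinarith [pow_succ b n, pow_succ c n]

lemma aux_frac {x u v : ℝ} (hx0 : 0 < x) (hx1 : x ≤ 1) (hu : 0 ≤ u) (huv : u ≤ v) :
    x / (x + (1 - x) * v) ≤ x / (x + (1 - x) * u) ∧
    x / (x + (1 - x) * u) - x / (x + (1 - x) * v) ≤ (v - u) / x := by
  have h1x : 0 ≤ 1 - x := by linarith
  have hd1 : 0 < x + (1 - x) * u := by nlinarith
  have hd2 : 0 < x + (1 - x) * v := by nlinarith
  have hdd : x + (1 - x) * u ≤ x + (1 - x) * v := by nlinarith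
  have hxx : x * x ≤ (x + (1 - x) * u) * (x + (1 - x) * v) :=
    mul_le_mul (by nlinarith) (by nlinarith) hx0.le hd1.le
  constructor
  · exact div_le_div_of_nonneg_left hx0.le hd1 hdd
  · rw [div_sub_div _ _ (ne_of_gt hd1) (ne_of_gt hd2), div_le_div_iff₀ (by positivity) hx0]
    nlinarith [mul_nonneg (sub_nonneg.2 huv) (sub_nonneg.2 hxx),
      mul_nonneg (sub_nonneg.2 huv) (by positivity : (0:ℝ) ≤ x * x * x)]


lemma aux_denom_pos {x τ : ℝ} (hx0 : 0 < x) (hx1 : x ≤ 1) (ζ : ℝ) :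
    0 < x + (1 - x) * Real.exp (-τ * ζ) := by
  have := Real.exp_pos (-τ * ζ)
  nlinarith

lemma aux_cont {x τ : ℝ} (hx0 : 0 < x) (hx1 : x ≤ 1) :
    Continuous (fun ζ : ℝ => x / (x + (1 - x) * Real.exp (-τ * ζ))) :=
  continuous_const.div (by fun_prop) (fun ζ => (aux_denom_pos hx0 hx1 ζ).ne')

lemma aux_mono {x τ : ℝ} (hx0 : 0 < x) (hx1 : x ≤ 1) (ht0 : 0 < τ) :
    Monotone (fun ζ : ℝ => x / (x + (1 - x) * Real.exp (-τ * ζ))) := by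
  intro a b hab
  have he : Real.exp (-τ * b) ≤ Real.exp (-τ * a) :=
    Real.exp_le_exp.2 (by nlinarith)
  have h1x : (0:ℝ) ≤ 1 - x := by linarith
  have hd : x + (1 - x) * Real.exp (-τ * b) ≤ x + (1 - x) * Real.exp (-τ * a) := by
    nlinarith
  exact div_le_div_of_nonneg_left hx0.le (aux_denom_pos hx0 hx1 b) hd

lemma aux_integral {x τ : ℝ} (hx0 : 0 < x) (hx1 : x ≤ 1) (ht0 : 0 < τ) :
    ∫ ζ in (0:ℝ)..1, x / (x + (1 - x) * Real.exp (-τ * ζ)) =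
      (1 / τ) * Real.log (1 + x * (Real.exp τ - 1)) := by
  set F : ℝ → ℝ := fun ζ => ζ + τ⁻¹ * Real.log (x + (1 - x) * Real.exp (-τ * ζ)) with hF
  have hderiv : ∀ ζ ∈ Set.uIcc (0:ℝ) 1,
      HasDerivAt F (x / (x + (1 - x) * Real.exp (-τ * ζ))) ζ := by
    intro ζ _
    have h1 : HasDerivAt (fun ζ : ℝ => -τ * ζ) (-τ) ζ := by
      simpa using (hasDerivAt_id ζ).const_mul (-τ)
    have h2 : HasDerivAt (fun ζ : ℝ => Real.exp (-τ * ζ))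
        (Real.exp (-τ * ζ) * (-τ)) ζ := h1.exp
    have h3 : HasDerivAt (fun ζ : ℝ => x + (1 - x) * Real.exp (-τ * ζ))
        ((1 - x) * (Real.exp (-τ * ζ) * (-τ))) ζ :=
      (h2.const_mul (1 - x)).const_add x
    have h4 : HasDerivAt (fun ζ : ℝ => Real.log (x + (1 - x) * Real.exp (-τ * ζ)))
        ((1 - x) * (Real.exp (-τ * ζ) * (-τ)) / (x + (1 - x) * Real.exp (-τ * ζ))) ζ :=
      h3.log (aux_denom_pos hx0 hx1 ζ).ne'
    have h5 := ((h4.const_mul τ⁻¹).const_add 0).congr_deriv rfl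
    have h6 : HasDerivAt F
        (1 + τ⁻¹ * ((1 - x) * (Real.exp (-τ * ζ) * (-τ)) / (x + (1 - x) * Real.exp (-τ * ζ)))) ζ :=
      (hasDerivAt_id ζ).add (h4.const_mul τ⁻¹)
    convert h6 using 1
    have hD := (aux_denom_pos hx0 hx1 ζ (τ := τ)).ne'
    have hsimp : τ⁻¹ * ((1 - x) * (Real.exp (-τ * ζ) * (-τ)) / (x + (1 - x) * Real.exp (-τ * ζ)))
        = -((1 - x) * Real.exp (-τ * ζ)) / (x + (1 - x) * Real.exp (-τ * ζ)) := by
      rw [mul_div_assoc']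
      congr 1
      field_simp
    rw [hsimp, neg_div, ← sub_eq_add_neg, eq_sub_iff_add_eq, ← add_div,
      div_eq_one_iff_eq hD]
  have hint : IntervalIntegrable (fun ζ : ℝ => x / (x + (1 - x) * Real.exp (-τ * ζ)))
      MeasureTheory.volume 0 1 := (aux_cont hx0 hx1).intervalIntegrable 0 1
  rw [intervalIntegral.integral_eq_sub_of_hasDerivAt hderiv hint]
  have hD1 : (0:ℝ) < x + (1 - x) * Real.exp (-τ * 1) := aux_denom_pos hx0 hx1 1
  have hkey : 1 + x * (Real.exp τ - 1) = Real.exp τ * (x + (1 - x) * Real.exp (-τ * 1)) := by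
    have hE : Real.exp (-τ * 1) = (Real.exp τ)⁻¹ := by
      rw [show (-τ * 1 : ℝ) = -τ by ring, Real.exp_neg]
    rw [hE]
    field_simp
    ring
  rw [hkey, Real.log_mul (Real.exp_pos τ).ne' hD1.ne', Real.log_exp]
  simp only [hF]
  rw [show (-τ * 0 : ℝ) = 0 by ring, Real.exp_zero]
  rw [show x + (1 - x) * 1 = 1 by ring, Real.log_one]
  field_simp
  ring

lemma aux_bounds {x τ : ℝ} (hx0 : 0 < x) (hx1 : x ≤ 1) (ht0 : 0 < τ) (ht1 : τ ≤ 1)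
    (T : ℕ) (hT : 1 ≤ T) :
    (∫ ζ in (0:ℝ)..1, x / (x + (1 - x) * Real.exp (-τ * ζ)))
        - (x / (x + (1 - x) * Real.exp (-τ * 1)) - x / (x + (1 - x) * Real.exp (-τ * 0))) / T
      ≤ ∑ t ∈ Finset.range T, (1 / (T:ℝ)) * (x / (x + (1 - x) * (1 - τ / T) ^ t)) ∧
    ∑ t ∈ Finset.range T, (1 / (T:ℝ)) * (x / (x + (1 - x) * (1 - τ / T) ^ t))
      ≤ (∫ ζ in (0:ℝ)..1, x / (x + (1 - x) * Real.exp (-τ * ζ))) + τ ^ 2 / (x * T) := by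
  set g : ℝ → ℝ := fun ζ => x / (x + (1 - x) * Real.exp (-τ * ζ)) with hg
  set I : ℝ := ∫ ζ in (0:ℝ)..1, g ζ with hI
  have hTpos : (0:ℝ) < T := by exact_mod_cast hT
  have hTne : (T:ℝ) ≠ 0 := hTpos.ne'
  have hT1 : (1:ℝ) ≤ T := by exact_mod_cast hT
  -- Riemann sum of g
  set S : ℝ := ∑ t ∈ Finset.range T, (1 / (T:ℝ)) * g (t / T) with hS
  -- monotone comp
  have hmono : MonotoneOn (fun u : ℝ => g (u / T)) (Set.Icc (0:ℝ) (0 + T)) :=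
    ((aux_mono hx0 hx1 ht0).comp (monotone_id.div_const hTpos.le)).monotoneOn _
  have hcv : (∫ u in (0:ℝ)..(0 + (T:ℝ)), g (u / T)) = T * I := by
    rw [zero_add, intervalIntegral.integral_comp_div (f := g) hTne]
    rw [zero_div, div_self hTne, smul_eq_mul, hI]
  have h1 := hmono.sum_le_integral
  have h2 := hmono.integral_le_sum
  rw [hcv] at h1 h2
  simp only [zero_add] at h1 h2
  -- h1 : ∑ i in range T, g (i / T) ≤ T * I
  -- h2 : T * I ≤ ∑ i in range T, g ((i+1 : ℕ) / T)
  have hshift : ∑ i ∈ Finset.range T, g (((i:ℕ) + 1 : ℕ) / T)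
      = (∑ i ∈ Finset.range T, g (i / T)) + g 1 - g 0 := by
    have e1 := Finset.sum_range_succ (fun i : ℕ => g (i / T)) T
    have e2 := Finset.sum_range_succ' (fun i : ℕ => g (i / T)) T
    simp only [Nat.cast_zero, zero_div, Nat.cast_add, Nat.cast_one] at e1 e2 ⊢
    rw [div_self hTne] at e1
    linarith [e1, e2]
  rw [hshift] at h2
  have hsum : ∑ i ∈ Finset.range T, g (i / T) = T * S := by
    rw [hS, ← Finset.mul_sum]
    field_simp
  rw [hsum] at h1 h2
  have hSle : S ≤ I := le_of_mul_le_mul_left (by linarith) hTpos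
  have hSge : I - (g 1 - g 0) / T ≤ S := by
    rw [sub_le_iff_le_add, ← mul_le_mul_iff_right₀ hTpos, mul_add, mul_div_cancel₀ _ hTne]
    linarith
  -- per-term comparison
  have key : ∀ t ∈ Finset.range T,
      g (t / T) ≤ x / (x + (1 - x) * (1 - τ / T) ^ t) ∧
      x / (x + (1 - x) * (1 - τ / T) ^ t) ≤ g (t / T) + τ ^ 2 / (T * x) := by
    intro t htm
    have htT : (t:ℝ) ≤ T := by exact_mod_cast (Finset.mem_range.1 htm).le
    have ha0 : (0:ℝ) ≤ τ / T := by positivity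
    have hb1 : Real.exp (-(τ / T)) ≤ 1 := by
      calc Real.exp (-(τ / T)) ≤ Real.exp 0 := Real.exp_le_exp.2 (by linarith)
      _ = 1 := Real.exp_zero
    have ha1 : τ / T ≤ 1 := by rw [div_le_one hTpos]; linarith
    have hr0 : (0:ℝ) ≤ 1 - τ / T := by linarith
    have hrb : 1 - τ / T ≤ Real.exp (-(τ / T)) := by
      linarith [Real.add_one_le_exp (-(τ / T))]
    have hpow : (1 - τ / T) ^ t ≤ Real.exp (-(τ / T)) ^ t :=
      pow_le_pow_left₀ hr0 hrb t
    have hexp_eq : Real.exp (-(τ / T)) ^ t = Real.exp (-τ * (t / T)) := by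
      rw [← Real.exp_nat_mul]
      congr 1
      field_simp
    have hdiff : Real.exp (-(τ / T)) ^ t - (1 - τ / T) ^ t ≤ τ ^ 2 / T := by
      have hps := aux_pow_sub hr0 hrb hb1 t
      have hes := aux_exp_sub ha0
      have h7 : (t:ℝ) * (Real.exp (-(τ / T)) - (1 - τ / T)) ≤ T * ((τ / T) ^ 2) :=
        mul_le_mul htT (by linarith) (by linarith) hTpos.le
      have h8 : (T:ℝ) * ((τ / T) ^ 2) = τ ^ 2 / T := by
        field_simp
      linarith
    have hfrac := aux_frac hx0 hx1 (pow_nonneg hr0 t) hpow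
    have hgdef : g (t / T) = x / (x + (1 - x) * Real.exp (-(τ / T)) ^ t) := by
      rw [hexp_eq]
    constructor
    · rw [hgdef]; exact hfrac.1
    · have h9 : (Real.exp (-(τ / T)) ^ t - (1 - τ / T) ^ t) / x ≤ (τ ^ 2 / T) / x :=
        by gcongr
      rw [hgdef]
      have h10 : (τ ^ 2 / T) / x = τ ^ 2 / (T * x) := by rw [div_div]
      linarith [hfrac.2]
  have hSA : S ≤ ∑ t ∈ Finset.range T, (1 / (T:ℝ)) * (x / (x + (1 - x) * (1 - τ / T) ^ t)) := by
    rw [hS]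
    exact Finset.sum_le_sum fun t ht =>
      mul_le_mul_of_nonneg_left (key t ht).1 (by positivity)
  have hAS : ∑ t ∈ Finset.range T, (1 / (T:ℝ)) * (x / (x + (1 - x) * (1 - τ / T) ^ t))
      ≤ S + τ ^ 2 / (x * T) := by
    calc ∑ t ∈ Finset.range T, (1 / (T:ℝ)) * (x / (x + (1 - x) * (1 - τ / T) ^ t))
        ≤ ∑ t ∈ Finset.range T, (1 / (T:ℝ)) * (g (t / T) + τ ^ 2 / (T * x)) :=
          Finset.sum_le_sum fun t ht =>
            mul_le_mul_of_nonneg_left (key t ht).2 (by positivity)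
      _ = S + τ ^ 2 / (x * T) := by
          simp only [mul_add, Finset.sum_add_distrib, Finset.sum_const, Finset.card_range,
            nsmul_eq_mul, hS]
          field_simp
  have hg1 : g 1 = x / (x + (1 - x) * Real.exp (-τ * 1)) := rfl
  have hg0 : g 0 = x / (x + (1 - x) * Real.exp (-τ * 0)) := rfl
  have hIeq : I = ∫ ζ in (0:ℝ)..1, x / (x + (1 - x) * Real.exp (-τ * ζ)) := rfl
  constructor
  · rw [← hg1, ← hg0]; linarith
  · linarith


theorem stmt_16 (x τ : ℝ) (hx : x ∈ Set.Ioc (0:ℝ) 1) (hτ : τ ∈ Set.Ioc (0:ℝ) 1) :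
    Filter.Tendsto
      (fun T : ℕ => ∑ t ∈ Finset.range T,
        (1 / (T : ℝ)) * (x / (x + (1 - x) * (1 - τ / T) ^ t)))
      Filter.atTop
      (nhds (∫ ζ in (0:ℝ)..1, x / (x + (1 - x) * Real.exp (-τ * ζ)))) ∧
    ∫ ζ in (0:ℝ)..1, x / (x + (1 - x) * Real.exp (-τ * ζ)) =
      (1 / τ) * Real.log (1 + x * (Real.exp τ - 1)) := by
  obtain ⟨hx0, hx1⟩ := hx
  obtain ⟨ht0, ht1⟩ := hτ
  refine ⟨?_, aux_integral hx0 hx1 ht0⟩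
  set I : ℝ := ∫ ζ in (0:ℝ)..1, x / (x + (1 - x) * Real.exp (-τ * ζ)) with hI
  set C : ℝ := x / (x + (1 - x) * Real.exp (-τ * 1)) - x / (x + (1 - x) * Real.exp (-τ * 0))
    with hC
  have hlow : Filter.Tendsto (fun T : ℕ => I - C / T) Filter.atTop (nhds I) := by
    have h := tendsto_const_div_atTop_nhds_zero_nat C
    simpa using (tendsto_const_nhds (x := I) (f := Filter.atTop)).sub h
  have hup : Filter.Tendsto (fun T : ℕ => I + τ ^ 2 / (x * T)) Filter.atTop (nhds I) := by
    have h := tendsto_const_div_atTop_nhds_zero_nat (τ ^ 2 / x)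
    have heq : (fun T : ℕ => I + τ ^ 2 / (x * T)) = fun T : ℕ => I + (τ ^ 2 / x) / T := by
      funext T; rw [div_div]
    rw [heq]
    simpa using (tendsto_const_nhds (x := I) (f := Filter.atTop)).add h
  apply tendsto_of_tendsto_of_tendsto_of_le_of_le' hlow hup
  · filter_upwards [Filter.eventually_ge_atTop 1] with T hT
    exact (aux_bounds hx0 hx1 ht0 ht1 T hT).1
  · filter_upwards [Filter.eventually_ge_atTop 1] with T hT
    exact (aux_bounds hx0 hx1 ht0 ht1 T hT).2
end

section
/- Let ℓ_τ be the largest integer ℓ ≥ 0 with 1 - e^{-ℓ} ≤ τ, for τ ∈ [0,1). Then the multiset S(τ) = {1-e^{-1}, e^{-1}-e^{-2}, …, e^{-ℓ_τ+1}-e^{-ℓ_τ}, τ-(1-e^{-ℓ_τ})} consists of nonnegative reals summing to τ, and for every subset P of S(τ), ∑_{y∈P} y ≤ 1 - e^{-|P|}. -/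
private lemma sum_antitone_le (f : ℕ → ℝ) (hf : ∀ i j : ℕ, i ≤ j → f j ≤ f i)
    (A : Finset ℕ) : ∑ a ∈ A, f a ≤ ∑ i ∈ Finset.range A.card, f i := by
  induction A using Finset.induction_on_max with
  | empty => simp
  | insert b A hb ih =>
    have hbA : b ∉ A := fun h => lt_irrefl b (hb b h)
    rw [Finset.sum_insert hbA, Finset.card_insert_of_notMem hbA,
      Finset.sum_range_succ]
    have hcard : A.card ≤ b := by
      have : A ⊆ Finset.range b := fun a ha => Finset.mem_range.mpr (hb a ha)
      simpa using Finset.card_le_card this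
    have := hf A.card b hcard
    linarith [ih]

private lemma telescope (n : ℕ) :
    ∑ i ∈ Finset.range n, (Real.exp (-(i:ℝ)) - Real.exp (-((i:ℝ)+1))) =
      1 - Real.exp (-(n:ℝ)) := by
  have := Finset.sum_range_sub' (fun i : ℕ => Real.exp (-(i:ℝ))) n
  simp only [Nat.cast_add, Nat.cast_one, neg_add] at this ⊢
  rw [this]
  norm_num

theorem stmt_19 (τ : ℝ) (hτ : τ ∈ Set.Ico (0:ℝ) 1) (ℓ : ℕ)
    (hℓ : 1 - Real.exp (-(ℓ : ℝ)) ≤ τ)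
    (hℓmax : ∀ m : ℕ, 1 - Real.exp (-(m : ℝ)) ≤ τ → m ≤ ℓ)
    (s : Fin (ℓ + 1) → ℝ)
    (hs : ∀ k : Fin (ℓ + 1), s k =
      if (k : ℕ) < ℓ then Real.exp (-((k : ℕ) : ℝ)) - Real.exp (-(((k : ℕ) : ℝ) + 1))
      else τ - (1 - Real.exp (-(ℓ : ℝ)))) :
    (∀ k, 0 ≤ s k) ∧ (∑ k, s k = τ) ∧
    ∀ P : Finset (Fin (ℓ + 1)), ∑ k ∈ P, s k ≤ 1 - Real.exp (-(P.card : ℝ)) := by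
  set f : ℕ → ℝ := fun i => Real.exp (-(i:ℝ)) - Real.exp (-((i:ℝ)+1)) with hf
  have hfpos : ∀ i : ℕ, 0 ≤ f i := by
    intro i
    have : Real.exp (-((i:ℝ)+1)) ≤ Real.exp (-(i:ℝ)) := Real.exp_le_exp.mpr (by linarith)
    simp only [hf]; linarith
  have hfmono : ∀ i j : ℕ, i ≤ j → f j ≤ f i := by
    intro i j hij
    have hij' : (i:ℝ) ≤ j := by exact_mod_cast hij
    have h1 : Real.exp (-(j:ℝ)) ≤ Real.exp (-(i:ℝ)) := Real.exp_le_exp.mpr (by linarith)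
    have h2 : Real.exp (-(j:ℝ)) * (1 - Real.exp (-1)) ≤
        Real.exp (-(i:ℝ)) * (1 - Real.exp (-1)) := by
      apply mul_le_mul_of_nonneg_right h1
      have := Real.exp_lt_one_iff.mpr (show (-1:ℝ) < 0 by norm_num)
      linarith
    have e1 : ∀ k : ℕ, Real.exp (-((k:ℝ)+1)) = Real.exp (-(k:ℝ)) * Real.exp (-1) := by
      intro k; rw [← Real.exp_add]; ring_nf
    simp only [hf, e1]; nlinarith
  -- residual bound
  have hres0 : 0 ≤ τ - (1 - Real.exp (-(ℓ:ℝ))) := by linarith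
  have hτlt : τ < 1 - Real.exp (-((ℓ:ℝ)+1)) := by
    by_contra h
    push_neg at h
    have := hℓmax (ℓ+1) (by push_cast; linarith)
    omega
  have hresf : τ - (1 - Real.exp (-(ℓ:ℝ))) ≤ f ℓ := by
    simp only [hf]; linarith
  have hsle : ∀ k : Fin (ℓ+1), s k ≤ f (k : ℕ) := by
    intro k
    rw [hs k]
    split_ifs with h
    · exact le_refl _
    · have hk : (k : ℕ) = ℓ := by omega
      rw [hk]; exact hresf
  refine ⟨?_, ?_, ?_⟩
  · intro k
    rw [hs k]
    split_ifs with h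
    · exact hfpos k
    · exact hres0
  · calc ∑ k, s k
        = ∑ k : Fin (ℓ+1), (if (k:ℕ) < ℓ then f (k:ℕ) else τ - (1 - Real.exp (-(ℓ:ℝ)))) :=
          Finset.sum_congr rfl fun k _ => hs k
      _ = ∑ i ∈ Finset.range (ℓ+1), (if i < ℓ then f i else τ - (1 - Real.exp (-(ℓ:ℝ)))) :=
          Fin.sum_univ_eq_sum_range
            (fun i : ℕ => if i < ℓ then f i else τ - (1 - Real.exp (-(ℓ:ℝ)))) (ℓ+1)
      _ = τ := by
          rw [Finset.sum_range_succ, if_neg (lt_irrefl ℓ)]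
          have : ∑ i ∈ Finset.range ℓ, (if i < ℓ then f i else τ - (1 - Real.exp (-(ℓ:ℝ))))
              = ∑ i ∈ Finset.range ℓ, f i :=
            Finset.sum_congr rfl fun i hi => if_pos (Finset.mem_range.mp hi)
          rw [this, hf, telescope]
          ring
  · intro P
    calc ∑ k ∈ P, s k ≤ ∑ k ∈ P, f (k : ℕ) := Finset.sum_le_sum fun k _ => hsle k
      _ = ∑ a ∈ P.image (Fin.val), f a := by
          rw [Finset.sum_image]
          intro x _ y _ h; exact Fin.val_injective h
      _ ≤ ∑ i ∈ Finset.range (P.image Fin.val).card, f i :=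
          sum_antitone_le f hfmono _
      _ = 1 - Real.exp (-((P.image Fin.val).card : ℝ)) := telescope _
      _ = 1 - Real.exp (-(P.card : ℝ)) := by
          rw [Finset.card_image_of_injective _ Fin.val_injective]
end
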